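/- arXiv:2506.15427 — 7 statements merged into one kernel-verified Lean document; each statement's English description precedes it below -/
import Mathlib

section
/- Every Markov triple, i.e., every triple (a,b,c) of positive integers with a² + b² + c² = 3abc, can be obtained from the triple (1,1,1) by a finite sequence of mutations (a,b,c) ↦ (a,b,3ab−c) and permutations of the entries. -/
/-- An elementary move on triples of integers: either a mutation of the third entry,
or a transposition of entries (transpositions generate all permutations). -/
inductive MarkovMove : (ℤ × ℤ × ℤ) → (ℤ × ℤ × ℤ) → Prop
  | mutate (a b c : ℤ) : MarkovMove (a, b, c) (a, b, 3 * a * b - c)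
  | swap₁₂ (a b c : ℤ) : MarkovMove (a, b, c) (b, a, c)
  | swap₂₃ (a b c : ℤ) : MarkovMove (a, b, c) (a, c, b)

private lemma reach_swap12 {o : ℤ × ℤ × ℤ} {a b c : ℤ}
    (h : Relation.ReflTransGen MarkovMove o (a, b, c)) :
    Relation.ReflTransGen MarkovMove o (b, a, c) :=
  h.tail (MarkovMove.swap₁₂ a b c)

private lemma reach_swap23 {o : ℤ × ℤ × ℤ} {a b c : ℤ}
    (h : Relation.ReflTransGen MarkovMove o (a, b, c)) :
    Relation.ReflTransGen MarkovMove o (a, c, b) :=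
  h.tail (MarkovMove.swap₂₃ a b c)

private lemma reach_mutate {o : ℤ × ℤ × ℤ} {a b c d : ℤ}
    (h : Relation.ReflTransGen MarkovMove o (a, b, c)) (hd : d = 3 * a * b - c) :
    Relation.ReflTransGen MarkovMove o (a, b, d) := by
  subst hd; exact h.tail (MarkovMove.mutate a b c)

private lemma sortedReach : ∀ n : ℕ, ∀ a b c : ℤ, 0 < a → 0 < b → 0 < c → a ≤ b → b ≤ c →
    a ^ 2 + b ^ 2 + c ^ 2 = 3 * a * b * c → (a + b + c).toNat ≤ n →
    Relation.ReflTransGen MarkovMove (1, 1, 1) (a, b, c) := by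
  intro n
  induction n with
  | zero => intro a b c ha hb hc _ _ _ hn; omega
  | succ n ih =>
    intro a b c ha hb hc hab hbc h hn
    by_cases hone : a = 1 ∧ b = 1
    · obtain ⟨rfl, rfl⟩ := hone
      have hc2 : (c - 1) * (c - 2) = 0 := by linear_combination h
      have hc12 : c = 1 ∨ c = 2 := by
        rcases mul_eq_zero.mp hc2 with h' | h' <;> omega
      rcases hc12 with rfl | rfl
      · exact Relation.ReflTransGen.refl
      · exact reach_mutate Relation.ReflTransGen.refl (by norm_num)
    · set c' := 3 * a * b - c with hc'def
      have hmk' : a ^ 2 + b ^ 2 + c' ^ 2 = 3 * a * b * c' := by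
        rw [hc'def]; linear_combination h
      have hcc' : c * c' = a ^ 2 + b ^ 2 := by
        rw [hc'def]; linear_combination -h
      have hc'pos : 0 < c' := by nlinarith [mul_pos ha ha, mul_pos hb hb]
      have hfb : (b - c') * (b - c) < 0 := by
        have h1 : (b - c') * (b - c) = a ^ 2 + 2 * b ^ 2 - 3 * a * b ^ 2 := by
          rw [hc'def]; linear_combination -h
        rw [h1]
        rcases (by omega : a = 1 ∨ 2 ≤ a) with rfl | h2
        · have hb2 : 2 ≤ b := by
            rcases (by omega : b = 1 ∨ 2 ≤ b) with rfl | h3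
            · exact absurd ⟨rfl, rfl⟩ hone
            · exact h3
          nlinarith
        · nlinarith [mul_le_mul_of_nonneg_right hab (le_of_lt hb)]
      have hc'b : c' < b := by nlinarith
      have hsum : (a + b + c').toNat ≤ n := by omega
      have hr' : Relation.ReflTransGen MarkovMove (1, 1, 1) (a, b, c') := by
        rcases le_total a c' with hac' | hc'a
        · have hh := ih a c' b ha hc'pos hb hac' (le_of_lt hc'b)
            (by linear_combination hmk') (by omega)
          exact reach_swap23 hh
        · have hh := ih c' a b hc'pos ha hb hc'a hab
            (by linear_combination hmk') (by omega)
          exact reach_swap23 (reach_swap12 hh)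
      exact reach_mutate hr' (by omega)

/-- Every Markov triple is obtained from `(1,1,1)` by a finite sequence of mutations
and permutations of the entries. -/
theorem markov_reachable_from_one (a b c : ℤ) (ha : 0 < a) (hb : 0 < b) (hc : 0 < c)
    (h : a ^ 2 + b ^ 2 + c ^ 2 = 3 * a * b * c) :
    Relation.ReflTransGen MarkovMove (1, 1, 1) (a, b, c) := by
  rcases le_total a b with hab | hba <;> rcases le_total b c with hbc | hcb <;>
    rcases le_total a c with hac | hca
  · exact sortedReach (a + b + c).toNat a b c ha hb hc hab hbc h le_rfl
  · exact sortedReach (a + b + c).toNat a b c ha hb hc hab hbc h le_rfl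
  · -- a ≤ b, c ≤ b, a ≤ c : sorted (a,c,b)
    exact reach_swap23 (sortedReach (a + c + b).toNat a c b ha hc hb hac hcb
      (by linear_combination h) le_rfl)
  · -- a ≤ b, c ≤ b, c ≤ a : sorted (c,a,b)
    exact reach_swap23 (reach_swap12 (sortedReach (c + a + b).toNat c a b hc ha hb hca hab
      (by linear_combination h) le_rfl))
  · -- b ≤ a, b ≤ c, a ≤ c : sorted (b,a,c)
    exact reach_swap12 (sortedReach (b + a + c).toNat b a c hb ha hc hba hac
      (by linear_combination h) le_rfl)
  · -- b ≤ a, b ≤ c, c ≤ a : sorted (b,c,a)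
    exact reach_swap12 (reach_swap23 (sortedReach (b + c + a).toNat b c a hb hc ha hbc hca
      (by linear_combination h) le_rfl))
  · -- b ≤ a, c ≤ b, a ≤ c : all equal essentially
    exact sortedReach (a + b + c).toNat a b c ha hb hc (le_trans hac hcb) (le_trans hba hac) h le_rfl
  · -- c ≤ b ≤ a : sorted (c,b,a)
    exact reach_swap12 (reach_swap23 (reach_swap12 (sortedReach (c + b + a).toNat c b a hc hb ha
      hcb hba (by linear_combination h) le_rfl)))
end

section
/- Let f = x + y + 1/(xy) be a Laurent polynomial in two variables over ℂ. Then for every natural number d, the constant term of f^d equals d!/(k!)³ if d = 3k for some natural number k, and equals 0 if d is not divisible by 3. -/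
/-- Laurent polynomials in `n` variables over `ℂ`. -/
abbrev LaurentPoly (n : ℕ) : Type := AddMonoidAlgebra ℂ (Fin n → ℤ)

/-- The constant term of a Laurent polynomial: the coefficient of the monomial `x^0`. -/
noncomputable def constTerm {n : ℕ} (f : LaurentPoly n) : ℂ := f.coeff 0

/-- The standard toric Landau–Ginzburg model of `ℙ²`. -/
noncomputable def lgP2 : LaurentPoly 2 :=
  AddMonoidAlgebra.single ![1, 0] 1 + AddMonoidAlgebra.single ![0, 1] 1 +
    AddMonoidAlgebra.single ![-1, -1] 1

def vv : Fin 3 → (Fin 2 → ℤ) := ![![1, 0], ![0, 1], ![-1, -1]]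

lemma lgP2_eq : lgP2 = ∑ i : Fin 3, AddMonoidAlgebra.single (vv i) 1 := by
  rw [Fin.sum_univ_three]; rfl

lemma key (d : ℕ) : constTerm (lgP2 ^ d) =
    ∑ k ∈ Finset.piAntidiag (Finset.univ : Finset (Fin 3)) d, (Nat.multinomial Finset.univ k : ℂ) *
      (if (k 0 • vv 0 + k 1 • vv 1 + k 2 • vv 2 : Fin 2 → ℤ) = 0 then 1 else 0) := by
  rw [lgP2_eq, Finset.sum_pow_eq_sum_piAntidiag]
  rw [constTerm]
  rw [AddMonoidAlgebra.coeff_sum, Finsupp.finset_sum_apply]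
  refine Finset.sum_congr rfl ?_
  intro k _
  have : ∏ i : Fin 3, AddMonoidAlgebra.single (vv i) (1:ℂ) ^ k i =
      AddMonoidAlgebra.single (k 0 • vv 0 + k 1 • vv 1 + k 2 • vv 2) 1 := by
    rw [Fin.prod_univ_three]
    simp [AddMonoidAlgebra.single_pow, AddMonoidAlgebra.single_mul_single, add_assoc]
  rw [this]
  rw [AddMonoidAlgebra.natCast_def]
  rw [AddMonoidAlgebra.single_mul_single, zero_add, mul_one]
  simp [AddMonoidAlgebra.coeff_single, Finsupp.single_apply, eq_comm]

lemma vcond (k : Fin 3 → ℕ) :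
    (k 0 • vv 0 + k 1 • vv 1 + k 2 • vv 2 : Fin 2 → ℤ) = 0 ↔ k 0 = k 2 ∧ k 1 = k 2 := by
  simp only [funext_iff, Fin.forall_fin_two]
  simp only [Pi.add_apply, Pi.smul_apply, Pi.zero_apply, vv]
  simp [Matrix.cons_val_zero, Matrix.cons_val_one]
  omega

/-- The constant term of `(x + y + 1/(xy))^d` is `d!/(k!)³` when `d = 3k` and `0`
when `3 ∤ d`. -/
theorem constTerm_lgP2_pow (d : ℕ) :
    (∀ k : ℕ, d = 3 * k →
      constTerm (lgP2 ^ d) = (d.factorial : ℂ) / ((k.factorial : ℂ)) ^ 3) ∧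
    (¬ (3 ∣ d) → constTerm (lgP2 ^ d) = 0) := by
  constructor
  · intro k hk
    rw [key]
    rw [Finset.sum_eq_single_of_mem (fun _ => k)]
    · rw [if_pos ((vcond fun _ => k).2 ⟨rfl, rfl⟩)]
      have hs : ∑ i : Fin 3, (fun _ => k) i = d := by
        simp [Fin.sum_univ_three]
        omega
      have hspec := Nat.multinomial_spec (Finset.univ : Finset (Fin 3)) (fun _ => k)
      rw [hs] at hspec
      have hp : (∏ i : Fin 3, Nat.factorial ((fun _ => k) i)) = k.factorial ^ 3 := by
        rw [Fin.prod_univ_three]; ring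
      rw [hp] at hspec
      have hkc : ((k.factorial : ℂ)) ^ 3 ≠ 0 :=
        pow_ne_zero _ (Nat.cast_ne_zero.2 k.factorial_ne_zero)
      field_simp
      rw [eq_div_iff hkc, mul_comm]
      exact_mod_cast congrArg (Nat.cast : ℕ → ℂ) hspec
    · rw [Finset.mem_piAntidiag]
      refine ⟨by rw [Fin.sum_univ_three]; omega, by simp⟩
    · intro b hb hne
      rw [Finset.mem_piAntidiag] at hb
      rw [if_neg, mul_zero]
      intro hc
      rw [vcond] at hc
      apply hne
      have hsum : b 0 + b 1 + b 2 = d := by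
        have := hb.1; rw [Fin.sum_univ_three] at this; omega
      funext i
      fin_cases i <;> simp <;> omega
  · intro h
    rw [key]
    apply Finset.sum_eq_zero
    intro b hb
    rw [Finset.mem_piAntidiag] at hb
    rw [if_neg, mul_zero]
    intro hc
    rw [vcond] at hc
    apply h
    have hsum : b 0 + b 1 + b 2 = d := by
      have := hb.1; rw [Fin.sum_univ_three] at this; omega
    exact ⟨b 2, by omega⟩
end

section
/- Let f = x + y + 1/x + 1/y be a Laurent polynomial in two variables over ℂ. Then for every natural number k, the constant term of f^{2k} equals binom(2k,k)², and the constant term of f^{2k+1} equals 0. -/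
/-- The standard toric Landau–Ginzburg model of `ℙ¹ × ℙ¹`. -/
noncomputable def lgP1P1 : LaurentPoly 2 :=
  AddMonoidAlgebra.single ![1, 0] 1 + AddMonoidAlgebra.single ![0, 1] 1 +
    AddMonoidAlgebra.single ![-1, 0] 1 + AddMonoidAlgebra.single ![0, -1] 1

open AddMonoidAlgebra Finset

lemma vec_ext (a b c d : ℤ) : (![a,b] : Fin 2 → ℤ) = ![c,d] ↔ a = c ∧ b = d := by
  constructor
  · intro h
    exact ⟨congrFun h 0, congrFun h 1⟩
  · rintro ⟨rfl, rfl⟩; rfl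

lemma factored : lgP1P1 = (single ![1,0] 1 + single ![0,1] 1) * (single 0 1 + single ![-1,-1] 1) := by
  have h1 : (![1,0] : Fin 2 → ℤ) + ![-1,-1] = ![0,-1] := by
    ext i; fin_cases i <;> simp
  have h2 : (![0,1] : Fin 2 → ℤ) + ![-1,-1] = ![-1,0] := by
    ext i; fin_cases i <;> simp
  rw [lgP1P1, mul_add, add_mul, add_mul]
  simp only [AddMonoidAlgebra.single_mul_single, one_mul, mul_one, add_zero, h1, h2]
  abel

lemma pow_two_singles (a b : Fin 2 → ℤ) (d : ℕ) :
    (single a 1 + single b 1 : LaurentPoly 2) ^ d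
      = ∑ j ∈ range (d + 1), single (j • a + (d - j) • b) ((d.choose j : ℂ)) := by
  rw [add_pow]
  refine Finset.sum_congr rfl fun j hj => ?_
  rw [AddMonoidAlgebra.single_pow, AddMonoidAlgebra.single_pow, one_pow, one_pow,
    AddMonoidAlgebra.single_mul_single, one_mul]
  rw [show ((d.choose j : ℕ) : LaurentPoly 2) = single 0 ((d.choose j : ℕ) : ℂ) by
    simp [AddMonoidAlgebra.natCast_def]]
  rw [AddMonoidAlgebra.single_mul_single, add_zero, one_mul]

lemma cond_iff (d j l : ℕ) (hj : j ≤ d) (hl : l ≤ d) :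
    (j • (![1,0] : Fin 2 → ℤ) + (d - j) • ![0,1] + (l • (0 : Fin 2 → ℤ) + (d - l) • ![-1,-1]) = 0)
      ↔ (2 * j = d ∧ j = l) := by
  rw [funext_iff, Fin.forall_fin_two]
  simp only [Pi.add_apply, Pi.smul_apply, Matrix.cons_val_zero, Matrix.cons_val_one,
    Matrix.head_cons, Pi.zero_apply, smul_zero]
  simp only [nsmul_eq_mul, mul_one, mul_neg_one]
  omega

lemma ct_eq (d : ℕ) :
    constTerm (lgP1P1 ^ d) = ∑ j ∈ range (d + 1), ∑ l ∈ range (d + 1),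
      if 2 * j = d ∧ j = l then (d.choose j : ℂ) * (d.choose l) else 0 := by
  rw [factored, mul_pow, pow_two_singles, pow_two_singles, Finset.sum_mul_sum]
  simp only [AddMonoidAlgebra.single_mul_single]
  rw [constTerm]
  rw [AddMonoidAlgebra.coeff_sum]
  rw [Finsupp.finset_sum_apply]
  refine Finset.sum_congr rfl fun j hj => ?_
  rw [AddMonoidAlgebra.coeff_sum]
  rw [Finsupp.finset_sum_apply]
  refine Finset.sum_congr rfl fun l hl => ?_
  rw [AddMonoidAlgebra.coeff_single]
  rw [Finsupp.single_apply]
  rw [Finset.mem_range] at hj hl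
  exact if_congr (cond_iff d j l (by omega) (by omega)) rfl rfl


/-- The constant term of `(x + y + 1/x + 1/y)^(2k)` is `(C(2k,k))²`, and the constant
term of the odd powers vanishes. -/
theorem constTerm_lgP1P1_pow (k : ℕ) :
    constTerm (lgP1P1 ^ (2 * k)) = (((2 * k).choose k : ℕ) : ℂ) ^ 2 ∧
      constTerm (lgP1P1 ^ (2 * k + 1)) = 0 := by
  constructor
  · rw [ct_eq]
    have h : ∀ j ∈ range (2 * k + 1),
        (∑ l ∈ range (2 * k + 1), if 2 * j = 2 * k ∧ j = l
            then ((2 * k).choose j : ℂ) * ((2 * k).choose l) else 0)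
          = if j = k then ((2 * k).choose k : ℂ) * ((2 * k).choose k) else 0 := by
      intro j hj
      rcases eq_or_ne j k with rfl | hne
      · simp only [mul_comm 2 j] at hj ⊢
        simp [Finset.sum_ite_eq, Finset.mem_range, Nat.lt_succ_iff]
        intro h'; omega
      · rw [if_neg hne]
        refine Finset.sum_eq_zero fun l hl => if_neg ?_
        rintro ⟨h1, -⟩; omega
    rw [Finset.sum_congr rfl h, Finset.sum_ite_eq' (range (2 * k + 1)) k]
    rw [if_pos (by simp [Finset.mem_range]; omega), sq]
  · rw [ct_eq]
    refine Finset.sum_eq_zero fun j hj => Finset.sum_eq_zero fun l hl => if_neg ?_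
    rintro ⟨h1, -⟩; omega
end

section
/- Let f = x + y + z + 1/(xyz) be a Laurent polynomial in three variables over ℂ. Then for every natural number d, the constant term of f^d equals d!/(k!)⁴ if d = 4k, and 0 otherwise. -/
/-- The toric Landau–Ginzburg model of `ℙ³`. -/
noncomputable def lgP3 : LaurentPoly 3 :=
  AddMonoidAlgebra.single ![1, 0, 0] 1 + AddMonoidAlgebra.single ![0, 1, 0] 1 +
    AddMonoidAlgebra.single ![0, 0, 1] 1 + AddMonoidAlgebra.single ![-1, -1, -1] 1

open Finset AddMonoidAlgebra

def vs : Fin 4 → (Fin 3 → ℤ) := ![![1,0,0],![0,1,0],![0,0,1],![-1,-1,-1]]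

lemma lgP3_eq : lgP3 = ∑ i : Fin 4, AddMonoidAlgebra.single (vs i) 1 := by
  simp [lgP3, vs, Fin.sum_univ_four]

lemma key_lemma (d : ℕ) :  constTerm (lgP3 ^ d) =
    ∑ k ∈ Finset.piAntidiag Finset.univ d,
      if (∑ i : Fin 4, k i • vs i) = 0 then (Nat.multinomial Finset.univ k : ℂ) else 0 := by
  rw [lgP3_eq, Finset.sum_pow_eq_sum_piAntidiag, constTerm]
  rw [AddMonoidAlgebra.coeff_sum, Finsupp.finset_sum_apply]
  refine Finset.sum_congr rfl fun k _ => ?_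
  simp [AddMonoidAlgebra.single_pow, AddMonoidAlgebra.prod_single, AddMonoidAlgebra.natCast_def,
    AddMonoidAlgebra.single_mul_single,
    Finsupp.single_apply, eq_comm]

lemma cond_iff_s7 (k : Fin 4 → ℕ) :
    (∑ i : Fin 4, k i • vs i) = 0 ↔ (k 0 = k 3 ∧ k 1 = k 3 ∧ k 2 = k 3) := by
  constructor
  · intro h
    have h0 := congrFun h 0
    have h1 := congrFun h 1
    have h2 := congrFun h 2
    simp [vs, Fin.sum_univ_four] at h0 h1 h2
    omega
  · rintro ⟨h0, h1, h2⟩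
    funext j
    fin_cases j <;> simp [vs, Fin.sum_univ_four] <;> omega



/-- The constant term of `(x + y + z + 1/(xyz))^d` is `d!/(k!)⁴` when `d = 4k` and `0`
otherwise. -/
theorem constTerm_lgP3_pow (d : ℕ) :
    (∀ k : ℕ, d = 4 * k →
      constTerm (lgP3 ^ d) = (d.factorial : ℂ) / ((k.factorial : ℂ)) ^ 4) ∧
    (¬ (4 ∣ d) → constTerm (lgP3 ^ d) = 0) := by
  constructor
  · intro c hc
    rw [key_lemma]
    rw [Finset.sum_eq_single (fun _ => c)]
    · rw [if_pos ((cond_iff_s7 fun _ => c).mpr ⟨rfl, rfl, rfl⟩)]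
      have hm := Nat.multinomial_spec (Finset.univ : Finset (Fin 4)) (fun _ => c)
      simp only [Finset.prod_const, Finset.sum_const, Finset.card_univ, Fintype.card_fin,
        smul_eq_mul] at hm
      have hne : ((c.factorial : ℂ)) ^ 4 ≠ 0 := by
        exact pow_ne_zero _ (Nat.cast_ne_zero.mpr c.factorial_ne_zero)
      field_simp
      rw [hc, ← hm]
      push_cast
      field_simp
      rw [mul_div_cancel_right₀ _ (by exact_mod_cast c.factorial_ne_zero)]
    · intro k hk hne
      rw [if_neg]
      intro hcond
      rw [cond_iff_s7] at hcond
      apply hne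
      have hsum : k 0 + k 1 + k 2 + k 3 = d := by
        have := (Finset.mem_piAntidiag.mp hk).1
        rwa [Fin.sum_univ_four] at this
      funext i
      fin_cases i <;> simp <;> omega
    · intro h
      exact absurd (by simp [Finset.mem_piAntidiag, Fin.sum_univ_four]; omega) h
  · intro hnd
    rw [key_lemma]
    refine Finset.sum_eq_zero fun k hk => ?_
    rw [if_neg]
    intro hcond
    rw [cond_iff_s7] at hcond
    have hsum : k 0 + k 1 + k 2 + k 3 = d := by
      have := (Finset.mem_piAntidiag.mp hk).1
      rwa [Fin.sum_univ_four] at this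
    exact hnd ⟨k 3, by omega⟩
end

section
/- Let w : ℤⁿ → ℤ be a ℤ-linear functional and a a nonzero Laurent polynomial supported on ker(w). Let f be a Laurent polynomial such that g := μ_{w,a}(f) is again a Laurent polynomial, where μ_{w,a}(x^v) = x^v a^{w(v)}. Then for every natural number d, the constant term of g^d equals the constant term of f^d; hence mutations preserve the period of a Laurent polynomial. -/
/-- The embedding of Laurent polynomials into their field of fractions. -/
noncomputable def emb (n : ℕ) : LaurentPoly n →+* FractionRing (LaurentPoly n) :=
  algebraMap (LaurentPoly n) (FractionRing (LaurentPoly n))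

namespace MutationAux

variable {n : ℕ} (w : (Fin n → ℤ) →+ ℤ)

/-- projection onto the `w`-degree-zero part -/
noncomputable def proj0 : LaurentPoly n →+ LaurentPoly n :=
  AddMonoidAlgebra.coeffAddEquiv.symm.toAddMonoidHom.comp
    ((Finsupp.filterAddHom (fun v => w v = 0)).comp AddMonoidAlgebra.coeffAddEquiv.toAddMonoidHom)

lemma proj0_apply (p : LaurentPoly n) (x : Fin n → ℤ) :
    (proj0 w p).coeff x = if w x = 0 then p.coeff x else 0 :=
  Finsupp.filter_apply _ _ _

lemma constTerm_proj0 (p : LaurentPoly n) : constTerm (proj0 w p) = constTerm p := by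
  simp [constTerm, proj0_apply]

/-- supports of powers of a degree-zero element are degree zero -/
lemma support_pow (a : LaurentPoly n) (hsa : ∀ v ∈ a.coeff.support, w v = 0) (m : ℕ) :
    ∀ u ∈ (a ^ m).coeff.support, w u = 0 := by
  induction m with
  | zero =>
    intro u hu
    rw [pow_zero] at hu
    have : u ∈ (Finsupp.single (0 : Fin n → ℤ) (1 : ℂ)).support := hu
    have := Finsupp.support_single_subset this
    simp only [Finset.mem_singleton] at this
    simp [this]
  | succ m ih =>
    intro u hu
    rw [pow_succ] at hu
    have := AddMonoidAlgebra.support_coeff_mul_subset (a ^ m) a hu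
    rw [Finset.mem_add] at this
    obtain ⟨y, hy, z, hz, rfl⟩ := this
    rw [map_add, ih y hy, hsa z hz, add_zero]

/-- multiplication by a degree-zero element commutes with `proj0`, on singles -/
lemma proj0_mul_degzero (b : LaurentPoly n) (hb : ∀ u ∈ b.coeff.support, w u = 0)
    (v : Fin n → ℤ) (c : ℂ) :
    proj0 w (AddMonoidAlgebra.single v c * b) =
      (if w v = 0 then AddMonoidAlgebra.single v c * b else 0) := by
  ext x
  rw [proj0_apply]
  have hmul : (AddMonoidAlgebra.single v c * b).coeff x = c * b.coeff (-v + x) :=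
    AddMonoidAlgebra.coeff_single_mul_apply b c v x
  have hbval : ∀ y : Fin n → ℤ, b.coeff y ≠ 0 → w y = 0 := fun y hy =>
    hb y (Finsupp.mem_support_iff.mpr hy)
  by_cases hv : w v = 0
  · simp only [hv, if_true]
    by_cases hx : w x = 0
    · simp [hx]
    · simp only [hx, if_false]
      rw [hmul]
      rcases eq_or_ne (b.coeff (-v + x)) 0 with h | h
      · rw [h, mul_zero]
      · have hy := hbval _ h
        rw [map_add, map_neg] at hy
        exact absurd (by omega : w x = 0) hx
  · simp only [hv, if_false]
    by_cases hx : w x = 0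
    · simp only [hx, if_true, AddMonoidAlgebra.coeff_zero, Finsupp.coe_zero, Pi.zero_apply]
      rw [hmul]
      rcases eq_or_ne (b.coeff (-v + x)) 0 with h | h
      · rw [h, mul_zero]
      · have hy := hbval _ h
        rw [map_add, map_neg] at hy
        exact absurd (by omega : w v = 0) hv
    · simp [hx]

/-- multiplication by a degree-zero element commutes with `proj0` -/
lemma hom_apply_sum {R : Type} [AddCommMonoid R] (φ : LaurentPoly n →+ R) (p : LaurentPoly n) :
    φ p = ∑ v ∈ p.coeff.support, φ (AddMonoidAlgebra.single v (p.coeff v)) := by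
  conv_lhs => rw [← AddMonoidAlgebra.sum_coeff_single p]
  exact map_finsuppSum φ p.coeff AddMonoidAlgebra.single

lemma mul_eq_sum (p b : LaurentPoly n) :
    p * b = ∑ v ∈ p.coeff.support, AddMonoidAlgebra.single v (p.coeff v) * b := by
  conv_lhs => rw [← AddMonoidAlgebra.sum_coeff_single p]
  exact Finsupp.sum_mul b p.coeff

lemma proj0_mul (p b : LaurentPoly n) (hb : ∀ u ∈ b.coeff.support, w u = 0) :
    proj0 w (p * b) = proj0 w p * b := by
  rw [mul_eq_sum p b, map_sum, hom_apply_sum (proj0 w) p, Finset.sum_mul]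
  refine Finset.sum_congr rfl fun v hv => ?_
  rw [proj0_mul_degzero w b hb v (p.coeff v)]
  have : (proj0 w) (AddMonoidAlgebra.single v (p.coeff v)) =
      if w v = 0 then AddMonoidAlgebra.single v (p.coeff v) else (0 : LaurentPoly n) := by
    split
    · exact congrArg AddMonoidAlgebra.ofCoeff (Finsupp.filter_single_of_pos _ ‹_›)
    · exact congrArg AddMonoidAlgebra.ofCoeff (Finsupp.filter_single_of_neg _ ‹_›)
  rw [this]
  split <;> simp

end MutationAux

set_option synthInstance.maxHeartbeats 1000000 in
open MutationAux in
/-- If `g` is a mutation of `f` (i.e. `g` is a Laurent polynomial equal, in the fraction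
field, to the image of `f` under the mutation automorphism `x^v ↦ x^v a^{w v}` with factor
`a` supported on `ker w`), then the constant terms of all powers of `f` and `g` agree;
hence mutations preserve the period. -/
theorem mutation_preserves_period (n : ℕ) (w : (Fin n → ℤ) →+ ℤ)
    (a : LaurentPoly n) (ha : a ≠ 0) (hsa : ∀ v ∈ a.coeff.support, w v = 0)
    (f g : LaurentPoly n)
    (σ : FractionRing (LaurentPoly n) ≃+* FractionRing (LaurentPoly n))
    (hσ : ∀ (v : Fin n → ℤ) (c : ℂ),
      σ (emb n (AddMonoidAlgebra.single v c)) =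
        emb n (AddMonoidAlgebra.single v c) * (emb n a) ^ (w v))
    (hg : σ (emb n f) = emb n g) (d : ℕ) :
    constTerm (g ^ d) = constTerm (f ^ d) := by
  haveI : IsDomain (LaurentPoly n) := NoZeroDivisors.to_isDomain _
  have hembinj : Function.Injective (emb n) :=
    IsFractionRing.injective (LaurentPoly n) (FractionRing (LaurentPoly n))
  have hea : emb n a ≠ 0 := fun h => ha (hembinj (by rw [h, map_zero]))
  -- reduce to a single pair p, q with σ (emb p) = emb q
  suffices key : ∀ p q : LaurentPoly n, σ (emb n p) = emb n q → constTerm q = constTerm p by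
    apply key
    rw [map_pow, map_pow, hg, map_pow]
  intro p q hpq
  -- shift exponents to be nonnegative
  set M : ℕ := p.coeff.support.sup fun v => (-(w v)).toNat with hM
  have hMv : ∀ v ∈ p.coeff.support, (0 : ℤ) ≤ w v + M := by
    intro v hv
    have h1 : (-(w v)).toNat ≤ M := Finset.le_sup (f := fun v => (-(w v)).toNat) hv
    have h2 : -(w v) ≤ (M : ℤ) := Int.toNat_le.mp h1
    omega
  set F : LaurentPoly n :=
    ∑ v ∈ p.coeff.support, AddMonoidAlgebra.single v (p.coeff v) * a ^ (w v + M).toNat with hF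
  -- F = q * a ^ M
  have hFq : F = q * a ^ M := by
    apply hembinj
    rw [hF, map_sum, map_mul, map_pow]
    have h3 : (emb n) p = ∑ v ∈ p.coeff.support, emb n (AddMonoidAlgebra.single v (p.coeff v)) :=
      hom_apply_sum (emb n).toAddMonoidHom p
    rw [← hpq, h3, map_sum, Finset.sum_mul]
    refine Finset.sum_congr rfl fun v hv => ?_
    rw [map_mul, map_pow, hσ, mul_assoc]
    congr 1
    rw [← zpow_natCast (emb n a) M, ← zpow_add₀ hea, ← zpow_natCast (emb n a) (w v + (M:ℤ)).toNat,
      Int.toNat_of_nonneg (hMv v hv)]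
  -- compute proj0 of F two ways
  have h1 : proj0 w F = proj0 w p * a ^ M := by
    rw [hF, map_sum]
    have hp : proj0 w p = ∑ v ∈ p.coeff.support,
        (if w v = 0 then AddMonoidAlgebra.single v (p.coeff v) else 0) := by
      rw [hom_apply_sum (proj0 w) p]
      refine Finset.sum_congr rfl fun v hv => ?_
      split
      · exact congrArg AddMonoidAlgebra.ofCoeff (Finsupp.filter_single_of_pos _ ‹_›)
      · exact congrArg AddMonoidAlgebra.ofCoeff (Finsupp.filter_single_of_neg _ ‹_›)
    rw [hp, Finset.sum_mul]
    refine Finset.sum_congr rfl fun v hv => ?_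
    rw [proj0_mul_degzero w _ (support_pow w a hsa _) v (p.coeff v)]
    split
    · congr 2
      have : w v = 0 := ‹_›
      omega
    · simp
  have h2 : proj0 w F = proj0 w q * a ^ M := by
    rw [hFq, proj0_mul w q _ (support_pow w a hsa M)]
  have haM : a ^ M ≠ 0 := pow_ne_zero _ ha
  have hpq0 : proj0 w q = proj0 w p := mul_right_cancel₀ haM (h2.symm.trans h1)
  rw [← constTerm_proj0 w q, ← constTerm_proj0 w p, hpq0]
end

section
/- The Laurent polynomial g = x + y + z + (x+y+1)³/(xyz), obtained from f = x + y + z(x+y+1) + (x+y+1)²/(xyz) by the mutation with weight w = (0,0,−1) and factor a = x + y + 1, is a Laurent polynomial (i.e., the rational function μ_{w,a}(f) has no denominator other than monomials), and for every natural number d ≤ 6 the constant terms of f^d and g^d agree. -/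
namespace MM215

/-- The monomial `x`. -/
noncomputable def X : LaurentPoly 3 := AddMonoidAlgebra.single ![1, 0, 0] 1
/-- The monomial `y`. -/
noncomputable def Y : LaurentPoly 3 := AddMonoidAlgebra.single ![0, 1, 0] 1
/-- The monomial `z`. -/
noncomputable def Z : LaurentPoly 3 := AddMonoidAlgebra.single ![0, 0, 1] 1
/-- The monomial `1/(xyz)`. -/
noncomputable def XYZinv : LaurentPoly 3 := AddMonoidAlgebra.single ![-1, -1, -1] 1

/-- `f = x + y + z(x+y+1) + (x+y+1)²/(xyz)`, a toric LG model of the blow-up of `ℙ³`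
in the intersection of a quadric and a cubic (Mori–Mukai No. 2.15). -/
noncomputable def f : LaurentPoly 3 := X + Y + Z * (X + Y + 1) + XYZinv * (X + Y + 1) ^ 2

/-- `g = x + y + z + (x+y+1)³/(xyz)`. -/
noncomputable def g : LaurentPoly 3 := X + Y + Z + XYZinv * (X + Y + 1) ^ 3

/-- The weight `w(v₁,v₂,v₃) = -v₃`. -/
noncomputable def w : (Fin 3 → ℤ) →+ ℤ := -(Pi.evalAddMonoidHom (fun _ : Fin 3 => ℤ) 2)

/-- The mutation factor `a = x + y + 1`, supported on `ker w`. -/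
noncomputable def a : LaurentPoly 3 := X + Y + 1

/-! ### Auxiliary setup -/

open AddMonoidAlgebra Finsupp Pointwise

instance : IsDomain (LaurentPoly 3) := NoZeroDivisors.to_isDomain _

local notation "R3" => LaurentPoly 3
local notation "K3" => FractionRing (LaurentPoly 3)

lemma a_ne_zero : a ≠ 0 := by
  intro h
  have h0 : a.coeff 0 = 1 := by
    have ha0 : a.coeff 0 = X.coeff 0 + Y.coeff 0 + (1 : R3).coeff 0 := rfl
    rw [ha0]
    rw [X, Y, AddMonoidAlgebra.one_def, AddMonoidAlgebra.coeff_single, AddMonoidAlgebra.coeff_single,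
      AddMonoidAlgebra.coeff_single]
    rw [Finsupp.single_eq_of_ne (by decide), Finsupp.single_eq_of_ne (by decide),
      Finsupp.single_eq_same]
    ring
  rw [h] at h0
  simp at h0

lemma emb_a_ne_zero : emb 3 a ≠ 0 := fun h => by
  have h2 : emb 3 a = emb 3 0 := by rw [h, map_zero]
  exact a_ne_zero (IsFractionRing.injective R3 K3 h2)

/-- `ω`-homogeneity of degree `k`. -/
def Homog (ω : (Fin 3 → ℤ) →+ ℤ) (p : LaurentPoly 3) (k : ℤ) : Prop :=
  ∀ v ∈ p.coeff.support, ω v = k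

section Homog

variable {ω : (Fin 3 → ℤ) →+ ℤ}

lemma Homog.zero (k : ℤ) : Homog ω 0 k := by intro v hv; simp at hv

lemma homog_single (v : Fin 3 → ℤ) (c : ℂ) : Homog ω (AddMonoidAlgebra.single v c) (ω v) := by
  intro u hu
  have := Finsupp.support_single_subset hu
  simp only [Finset.mem_singleton] at this
  rw [this]

lemma Homog.add {p q : R3} {k : ℤ} (hp : Homog ω p k) (hq : Homog ω q k) :
    Homog ω (p + q) k := by
  intro v hv
  rcases Finset.mem_union.mp (Finsupp.support_add hv) with h | h
  · exact hp v h
  · exact hq v h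

lemma Homog.mul {p q : R3} {k l : ℤ} (hp : Homog ω p k) (hq : Homog ω q l) :
    Homog ω (p * q) (k + l) := by
  classical
  intro v hv
  have := AddMonoidAlgebra.support_coeff_mul_subset p q hv
  rcases Finset.mem_add.mp this with ⟨b, hb, c, hc, rfl⟩
  rw [map_add, hp b hb, hq c hc]

lemma Homog.one : Homog ω 1 0 := by
  rw [AddMonoidAlgebra.one_def]
  simpa using homog_single (ω := ω) 0 1

lemma Homog.pow {p : R3} {k : ℤ} (hp : Homog ω p k) (m : ℕ) :
    Homog ω (p ^ m) (m * k) := by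
  induction m with
  | zero => simpa using Homog.one
  | succ n ih =>
      have hcast : ((n + 1 : ℕ) : ℤ) * k = (n : ℤ) * k + k := by push_cast; ring
      rw [pow_succ, hcast]
      exact ih.mul hp

lemma homog_natCast (m : ℕ) : Homog ω (m : R3) 0 := by
  rw [AddMonoidAlgebra.natCast_def]
  simpa using homog_single (ω := ω) 0 (m : ℂ)

lemma Homog.constTerm_eq_zero {p : R3} {k : ℤ} (hp : Homog ω p k) (hk : k ≠ 0) :
    constTerm p = 0 := by
  by_contra h
  have h0 : (0 : Fin 3 → ℤ) ∈ p.coeff.support := Finsupp.mem_support_iff.mpr h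
  have := hp 0 h0
  rw [map_zero] at this
  exact hk this.symm

end Homog

lemma homog_w_X : Homog w X 0 := by exact homog_single (ω := w) ![1,0,0] 1
lemma homog_w_Y : Homog w Y 0 := by exact homog_single (ω := w) ![0,1,0] 1
lemma homog_w_Z : Homog w Z (-1) := by exact homog_single (ω := w) ![0,0,1] 1
lemma homog_w_XYZinv : Homog w XYZinv 1 := by exact homog_single (ω := w) ![-1,-1,-1] 1

lemma homog_w_a : Homog w a 0 := ((homog_w_X.add homog_w_Y).add Homog.one : _)

/-- `a` is homogeneous of degree `0` for any weight vanishing on its support. -/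
lemma homog_a_of (ω : (Fin 3 → ℤ) →+ ℤ) (h1 : ω ![1,0,0] = 0) (h2 : ω ![0,1,0] = 0) :
    Homog ω a 0 := by
  have hx : Homog ω X 0 := by simpa [h1, X] using homog_single (ω := ω) ![1,0,0] 1
  have hy : Homog ω Y 0 := by simpa [h2, Y] using homog_single (ω := ω) ![0,1,0] 1
  exact (hx.add hy).add Homog.one

section Phi

variable (ω : (Fin 3 → ℤ) →+ ℤ)

/-- The monomial part of the mutation map. -/
noncomputable def Γ : Multiplicative (Fin 3 → ℤ) →* K3 where
  toFun v := emb 3 (AddMonoidAlgebra.single v.toAdd 1) * (emb 3 a) ^ (ω v.toAdd)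
  map_one' := by
    show emb 3 (AddMonoidAlgebra.single (0 : Fin 3 → ℤ) 1) * (emb 3 a) ^ (ω 0) = 1
    rw [← AddMonoidAlgebra.one_def, map_one, map_zero, zpow_zero, one_mul]
  map_mul' x y := by
    have h1 : (AddMonoidAlgebra.single (x.toAdd + y.toAdd) (1:ℂ))
        = AddMonoidAlgebra.single x.toAdd 1 * AddMonoidAlgebra.single y.toAdd 1 := by
      rw [AddMonoidAlgebra.single_mul_single, mul_one]
    show emb 3 (AddMonoidAlgebra.single (x.toAdd + y.toAdd) 1)
        * (emb 3 a) ^ (ω (x.toAdd + y.toAdd)) =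
      (emb 3 (AddMonoidAlgebra.single x.toAdd 1) * (emb 3 a) ^ (ω x.toAdd)) *
      (emb 3 (AddMonoidAlgebra.single y.toAdd 1) * (emb 3 a) ^ (ω y.toAdd))
    rw [h1, map_mul, map_add, zpow_add₀ emb_a_ne_zero]
    ring

/-- The mutation map on Laurent polynomials, with values in the fraction field. -/
noncomputable def Phi : R3 →+* K3 :=
  AddMonoidAlgebra.liftNCRingHom ((emb 3).comp AddMonoidAlgebra.singleZeroRingHom) (Γ ω)
    (fun _ _ => Commute.all _ _)

lemma Phi_single (v : Fin 3 → ℤ) (c : ℂ) :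
    Phi ω (AddMonoidAlgebra.single v c) = emb 3 (AddMonoidAlgebra.single v c) * (emb 3 a) ^ (ω v) := by
  show AddMonoidAlgebra.liftNC _ _ _ = _
  rw [AddMonoidAlgebra.liftNC_single]
  show emb 3 (AddMonoidAlgebra.single 0 c) * (emb 3 (AddMonoidAlgebra.single v 1) * (emb 3 a) ^ (ω v)) = _
  rw [← mul_assoc, ← map_mul, AddMonoidAlgebra.single_mul_single, zero_add, mul_one]

lemma Phi_of_homog_zero (p : R3) (hp : Homog ω p 0) : Phi ω p = emb 3 p := by
  conv_lhs => rw [← AddMonoidAlgebra.sum_single p]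
  conv_rhs => rw [← AddMonoidAlgebra.sum_single p]
  rw [map_finsuppSum, map_finsuppSum]
  apply Finsupp.sum_congr
  intro v hv
  rw [Phi_single, hp v hv, zpow_zero, mul_one]

lemma Phi_injective (h1 : ω ![1,0,0] = 0) (h2 : ω ![0,1,0] = 0) :
    Function.Injective (Phi ω) := by
  classical
  rw [injective_iff_map_eq_zero]
  intro p hp
  by_contra hne
  -- clear denominators
  set u : K3 := emb 3 a with hu_def
  have hu : u ≠ 0 := emb_a_ne_zero
  set N : ℕ := p.coeff.support.sup fun v => (-(ω v)).toNat with hN_def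
  have hN : ∀ v ∈ p.coeff.support, (0:ℤ) ≤ (N:ℤ) + ω v := by
    intro v hv
    have h1 : (-(ω v)).toNat ≤ N := Finset.le_sup (f := fun v => (-(ω v)).toNat) hv
    omega
  set M : R3 := ∑ v ∈ p.coeff.support,
      AddMonoidAlgebra.single v (p.coeff v) * a ^ ((N:ℤ) + ω v).toNat with hM_def
  have hM0 : M = 0 := by
    apply IsFractionRing.injective R3 K3
    rw [map_zero]
    have : emb 3 M = Phi ω p * u ^ (N:ℤ) := by
      have hrep : Phi ω p = ∑ v ∈ p.coeff.support,
          emb 3 (AddMonoidAlgebra.single v (p.coeff v)) * u ^ (ω v) := by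
        have hps : p = ∑ v ∈ p.coeff.support, AddMonoidAlgebra.single v (p.coeff v) :=
          (AddMonoidAlgebra.sum_single p).symm
        conv_lhs => rw [hps]
        rw [map_sum (Phi ω) _ p.coeff.support]
        exact Finset.sum_congr rfl fun v _ => Phi_single ω v (p.coeff v)
      rw [hrep, Finset.sum_mul, hM_def, map_sum (emb 3) _ p.coeff.support]
      apply Finset.sum_congr rfl
      intro v hv
      rw [map_mul, map_pow, mul_assoc, ← zpow_natCast (emb 3 a) (((N:ℤ) + ω v).toNat),
        Int.toNat_of_nonneg (hN v hv), ← hu_def, ← zpow_add₀ hu, add_comm (ω v) (N:ℤ)]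
    show emb 3 M = 0
    rw [this, hp, zero_mul]
  -- the lowest ω-homogeneous part of M is nonzero
  have hsupp : p.coeff.support.Nonempty := Finsupp.support_nonempty_iff.mpr (fun h => hne (AddMonoidAlgebra.coeff_injective h))
  have himg : (p.coeff.support.image fun v => ω v).Nonempty := hsupp.image _
  set k : ℤ := (p.coeff.support.image fun v => ω v).min' himg with hk_def
  obtain ⟨v₀, hv₀, hωv₀⟩ := Finset.mem_image.mp ((p.coeff.support.image fun v => ω v).min'_mem himg)
  set q : R3 := AddMonoidAlgebra.ofCoeff (p.coeff.filter (fun v => ω v = k)) with hq_def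
  have hq : q ≠ 0 := by
    intro h
    have : p.coeff v₀ = 0 := by
      have : q.coeff v₀ = p.coeff v₀ :=
        Finsupp.filter_apply_pos (fun v => ω v = k) p.coeff (a := v₀) hωv₀
      rw [h] at this
      simpa using this.symm
    exact (Finsupp.mem_support_iff.mp hv₀) this
  set n : ℕ := ((N:ℤ) + k).toNat with hn_def
  have hfil : Finsupp.filter (fun v => ω v = k) M.coeff = (q * a ^ n).coeff := by
    rw [hM_def, AddMonoidAlgebra.coeff_sum]
    rw [show (Finsupp.filter (fun v => ω v = k) (∑ v ∈ p.coeff.support,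
        (AddMonoidAlgebra.single v (p.coeff v) * a ^ ((N:ℤ) + ω v).toNat).coeff)) =
        ∑ v ∈ p.coeff.support, Finsupp.filter (fun v => ω v = k)
          (AddMonoidAlgebra.single v (p.coeff v) * a ^ ((N:ℤ) + ω v).toNat).coeff from
      map_sum (Finsupp.filterAddHom (fun v => ω v = k)) _ _]
    have hterm : ∀ v ∈ p.coeff.support,
        Finsupp.filter (fun v => ω v = k)
          (AddMonoidAlgebra.single v (p.coeff v) * a ^ ((N:ℤ) + ω v).toNat).coeff =
        if ω v = k then (AddMonoidAlgebra.single v (p.coeff v) * a ^ n).coeff else 0 := by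
      intro v _
      have hhom : ∀ m : ℕ, Homog ω (AddMonoidAlgebra.single v (p.coeff v) * a ^ m) (ω v) := by
        intro m
        have := (homog_single (ω := ω) v (p.coeff v)).mul ((homog_a_of ω h1 h2).pow m)
        simpa using this
      by_cases hcase : ω v = k
      · rw [if_pos hcase]
        have hexp : (((N:ℤ) + ω v).toNat) = n := by rw [hcase, hn_def]
        rw [hexp]
        rw [Finsupp.filter_eq_self_iff]
        intro x hx
        have := hhom n x (Finsupp.mem_support_iff.mpr hx)
        rw [this, hcase]
      · rw [if_neg hcase]
        rw [Finsupp.filter_eq_zero_iff]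
        intro x hx
        by_contra hzx
        exact hcase ((hhom _ x (Finsupp.mem_support_iff.mpr hzx)) ▸ hx)
    have hqrep : q = ∑ x ∈ p.coeff.support.filter (fun x => ω x = k),
        AddMonoidAlgebra.single x (p.coeff x) := by
      conv_lhs => rw [← AddMonoidAlgebra.sum_single q]
      show ∑ x ∈ q.coeff.support, AddMonoidAlgebra.single x (q.coeff x) = _
      rw [hq_def, AddMonoidAlgebra.coeff_ofCoeff, Finsupp.support_filter]
      apply Finset.sum_congr rfl
      intro x hx
      rw [Finsupp.filter_apply_pos]
      exact (Finset.mem_filter.mp hx).2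
    rw [Finset.sum_congr rfl hterm, Finset.sum_ite, Finset.sum_const_zero, add_zero,
      hqrep, Finset.sum_mul, AddMonoidAlgebra.coeff_sum]
  rw [hM0, AddMonoidAlgebra.coeff_zero, Finsupp.filter_zero] at hfil
  exact mul_ne_zero hq (pow_ne_zero _ a_ne_zero) (AddMonoidAlgebra.coeff_injective hfil.symm)

end Phi

/-! ### The mutation automorphism -/

lemma w_e1 : w ![1,0,0] = 0 := rfl
lemma w_e2 : w ![0,1,0] = 0 := rfl
lemma w_e3 : w ![0,0,1] = -1 := rfl
lemma w_m : w ![-1,-1,-1] = 1 := rfl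
lemma nw_e1 : (-w) ![1,0,0] = 0 := rfl
lemma nw_e2 : (-w) ![0,1,0] = 0 := rfl

/-- The forward mutation, as a field endomorphism. -/
noncomputable def sigmaHom : K3 →+* K3 :=
  IsFractionRing.lift (Phi_injective w w_e1 w_e2)

/-- The backward mutation, as a field endomorphism. -/
noncomputable def tauHom : K3 →+* K3 :=
  IsFractionRing.lift (Phi_injective (-w) nw_e1 nw_e2)

lemma sigmaHom_emb (p : R3) : sigmaHom (emb 3 p) = Phi w p :=
  IsFractionRing.lift_algebraMap _ _

lemma tauHom_emb (p : R3) : tauHom (emb 3 p) = Phi (-w) p :=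
  IsFractionRing.lift_algebraMap _ _

lemma Phi_w_a : Phi w a = emb 3 a := Phi_of_homog_zero w a homog_w_a

lemma Phi_nw_a : Phi (-w) a = emb 3 a :=
  Phi_of_homog_zero (-w) a (homog_a_of (-w) nw_e1 nw_e2)

lemma tau_sigma : tauHom.comp sigmaHom = RingHom.id K3 := by
  apply IsLocalization.ringHom_ext (nonZeroDivisors R3)
  apply AddMonoidAlgebra.ringHom_ext
  · intro b
    show tauHom (sigmaHom (emb 3 (AddMonoidAlgebra.single (0 : Fin 3 → ℤ) b))) =
      emb 3 (AddMonoidAlgebra.single (0 : Fin 3 → ℤ) b)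
    rw [sigmaHom_emb, Phi_single, map_zero, zpow_zero, mul_one, tauHom_emb, Phi_single,
      map_zero, zpow_zero, mul_one]
  · intro v
    show tauHom (sigmaHom (emb 3 (AddMonoidAlgebra.single v (1:ℂ)))) =
      emb 3 (AddMonoidAlgebra.single v (1:ℂ))
    rw [sigmaHom_emb, Phi_single, map_mul, map_zpow₀, tauHom_emb, tauHom_emb, Phi_nw_a,
      Phi_single]
    rw [show ((-w) v : ℤ) = -(w v) from rfl, mul_assoc, ← zpow_add₀ emb_a_ne_zero,
      neg_add_cancel, zpow_zero, mul_one]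

lemma sigma_tau : sigmaHom.comp tauHom = RingHom.id K3 := by
  apply IsLocalization.ringHom_ext (nonZeroDivisors R3)
  apply AddMonoidAlgebra.ringHom_ext
  · intro b
    show sigmaHom (tauHom (emb 3 (AddMonoidAlgebra.single (0 : Fin 3 → ℤ) b))) =
      emb 3 (AddMonoidAlgebra.single (0 : Fin 3 → ℤ) b)
    rw [tauHom_emb, Phi_single, map_zero, zpow_zero, mul_one, sigmaHom_emb, Phi_single,
      map_zero, zpow_zero, mul_one]
  · intro v
    show sigmaHom (tauHom (emb 3 (AddMonoidAlgebra.single v (1:ℂ)))) =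
      emb 3 (AddMonoidAlgebra.single v (1:ℂ))
    rw [tauHom_emb, Phi_single, map_mul, map_zpow₀, sigmaHom_emb, sigmaHom_emb, Phi_w_a,
      Phi_single]
    rw [show ((-w) v : ℤ) = -(w v) from rfl, mul_assoc, ← zpow_add₀ emb_a_ne_zero,
      add_neg_cancel, zpow_zero, mul_one]

/-- The mutation automorphism of the fraction field. -/
noncomputable def sigma : K3 ≃+* K3 := RingEquiv.ofRingHom sigmaHom tauHom sigma_tau tau_sigma

lemma sigma_apply (x : K3) : sigma x = sigmaHom x := rfl

lemma sigma_emb_f : sigma (emb 3 f) = emb 3 g := by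
  rw [sigma_apply, sigmaHom_emb]
  have ha : (X + Y + 1 : R3) = a := rfl
  have hZ : Phi w Z = emb 3 Z * (emb 3 a)⁻¹ := by
    rw [Z, Phi_single, show w ![0,0,1] = (-1 : ℤ) from rfl, zpow_neg_one]
  have hX : Phi w X = emb 3 X := by
    rw [X, Phi_single, show w ![1,0,0] = (0 : ℤ) from rfl, zpow_zero, mul_one]
  have hY : Phi w Y = emb 3 Y := by
    rw [Y, Phi_single, show w ![0,1,0] = (0 : ℤ) from rfl, zpow_zero, mul_one]
  have hW : Phi w XYZinv = emb 3 XYZinv * emb 3 a := by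
    rw [XYZinv, Phi_single, show w ![-1,-1,-1] = (1 : ℤ) from rfl, zpow_one]
  rw [f, ha, g, ha, map_add, map_add, map_add, map_mul, map_mul, map_pow, hX, hY, hZ, hW,
    Phi_w_a, map_add, map_add, map_add, map_mul, map_pow]
  have hzz : emb 3 Z * (emb 3 a)⁻¹ * emb 3 a = emb 3 Z := by
    rw [mul_assoc, inv_mul_cancel₀ emb_a_ne_zero, mul_one]
  rw [hzz]
  ring

/-! ### Constant terms -/

/-- The constant term as an additive map. -/
noncomputable def CT : R3 →+ ℂ where
  toFun := constTerm
  map_zero' := rfl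
  map_add' _ _ := rfl

lemma homog_w_S : Homog w (X + Y) 0 := homog_w_X.add homog_w_Y

lemma term_eq (j i mi c c' : ℕ) :
    constTerm ((X+Y)^j * ((Z*a)^i * (XYZinv*a^2)^mi * (c:R3)) * (c':R3)) =
    constTerm ((X+Y)^j * (Z^i * (XYZinv*a^3)^mi * (c:R3)) * (c':R3)) := by
  by_cases h : mi = i
  · rw [h]
    have : (Z*a)^i * (XYZinv*a^2)^i = Z^i * (XYZinv*a^3)^i := by
      rw [← mul_pow, ← mul_pow]
      congr 1
      ring
    rw [this]
  · have hfterm : Homog w ((X+Y)^j * ((Z*a)^i * (XYZinv*a^2)^mi * (c:R3)) * (c':R3))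
        ((mi : ℤ) - (i : ℤ)) := by
      have h1 := homog_w_S.pow j
      have h2 := (homog_w_Z.mul homog_w_a).pow i
      have h3 := (homog_w_XYZinv.mul (homog_w_a.pow 2)).pow mi
      have h4 := homog_natCast (ω := w) c
      have h5 := homog_natCast (ω := w) c'
      have := (h1.mul ((h2.mul h3).mul h4)).mul h5
      have heq : ((j:ℤ) * 0 + ((i:ℤ) * (-1 + 0) + (mi:ℤ) * (1 + (2:ℕ) * 0) + 0) + 0)
          = (mi : ℤ) - (i : ℤ) := by push_cast; ring
      rwa [heq] at this
    have hgterm : Homog w ((X+Y)^j * (Z^i * (XYZinv*a^3)^mi * (c:R3)) * (c':R3))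
        ((mi : ℤ) - (i : ℤ)) := by
      have h1 := homog_w_S.pow j
      have h2 := homog_w_Z.pow i
      have h3 := (homog_w_XYZinv.mul (homog_w_a.pow 3)).pow mi
      have h4 := homog_natCast (ω := w) c
      have h5 := homog_natCast (ω := w) c'
      have := (h1.mul ((h2.mul h3).mul h4)).mul h5
      have heq : ((j:ℤ) * 0 + ((i:ℤ) * (-1) + (mi:ℤ) * (1 + (3:ℕ) * 0) + 0) + 0)
          = (mi : ℤ) - (i : ℤ) := by push_cast; ring
      rwa [heq] at this
    have hne : (mi : ℤ) - (i : ℤ) ≠ 0 := by omega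
    rw [hfterm.constTerm_eq_zero hne, hgterm.constTerm_eq_zero hne]

lemma constTerm_pow_eq (d : ℕ) : constTerm (f ^ d) = constTerm (g ^ d) := by
  have ha : (X + Y + 1 : R3) = a := rfl
  have hf : f = (X + Y) + (Z * a + XYZinv * a ^ 2) := by rw [f, ha]; ring
  have hg2 : g = (X + Y) + (Z + XYZinv * a ^ 3) := by rw [g, ha]; ring
  show CT (f ^ d) = CT (g ^ d)
  rw [hf, hg2, add_pow (X + Y) (Z * a + XYZinv * a ^ 2) d,
    add_pow (X + Y) (Z + XYZinv * a ^ 3) d, map_sum CT _ _, map_sum CT _ _]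
  apply Finset.sum_congr rfl
  intro j _
  rw [add_pow (Z * a) (XYZinv * a ^ 2) (d - j), add_pow Z (XYZinv * a ^ 3) (d - j),
    Finset.mul_sum, Finset.mul_sum, Finset.sum_mul, Finset.sum_mul,
    map_sum CT _ _, map_sum CT _ _]
  apply Finset.sum_congr rfl
  intro i _
  exact term_eq j i (d - j - i) _ _



/-- `g` is the mutation of `f` with weight `w = (0,0,-1)` and factor `a = x+y+1`:
the mutation automorphism of the fraction field sends `f` to the Laurent polynomial `g`,
and their powers up to `6` have equal constant terms. -/
theorem mutation_mm215 :
    ∃ σ : FractionRing (LaurentPoly 3) ≃+* FractionRing (LaurentPoly 3),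
      (∀ (v : Fin 3 → ℤ) (c : ℂ),
        σ (emb 3 (AddMonoidAlgebra.single v c)) =
          emb 3 (AddMonoidAlgebra.single v c) * (emb 3 a) ^ (w v)) ∧
      σ (emb 3 f) = emb 3 g ∧
      (∀ d : ℕ, d ≤ 6 → constTerm (f ^ d) = constTerm (g ^ d)) := by
  refine ⟨sigma, ?_, sigma_emb_f, fun d _ => constTerm_pow_eq d⟩
  intro v c
  rw [sigma_apply, sigmaHom_emb, Phi_single]

end MM215
end

section
/- For all natural numbers k, the identity Σ_{j=0}^{k} binom(2k, 2j) · binom(2j, j) · binom(2k−2j, k−j) = binom(2k, k)² holds. -/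
open Finset

lemma sum_choose_sq (k : ℕ) :
    ∑ j ∈ Finset.range (k + 1), (k.choose j) ^ 2 = (2 * k).choose k := by
  have h := Nat.add_choose_eq k k k
  rw [Finset.Nat.sum_antidiagonal_eq_sum_range_succ_mk] at h
  rw [two_mul, h]
  refine Finset.sum_congr rfl fun j hj => ?_
  rw [Finset.mem_range] at hj
  show k.choose j ^ 2 = k.choose j * k.choose (k - j)
  rw [Nat.choose_symm (show j ≤ k by omega), sq]

lemma term_eq (k j : ℕ) (h : j ≤ k) :
    (2 * k).choose (2 * j) * (2 * j).choose j * (2 * k - 2 * j).choose (k - j) =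
      (2 * k).choose k * (k.choose j) ^ 2 := by
  have hjj : j + j = 2 * j := by ring
  have h1 := Nat.choose_mul_factorial_mul_factorial (show j ≤ 2 * j by omega)
  have h2 := Nat.choose_mul_factorial_mul_factorial (show k - j ≤ 2 * k - 2 * j by omega)
  have h3 := Nat.choose_mul_factorial_mul_factorial (show 2 * j ≤ 2 * k by omega)
  have h4 := Nat.choose_mul_factorial_mul_factorial (show k ≤ 2 * k by omega)
  have h5 := Nat.choose_mul_factorial_mul_factorial h
  have e1 : 2 * j - j = j := by omega
  have e2 : 2 * k - 2 * j - (k - j) = k - j := by omega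
  have e3 : 2 * k - k = k := by omega
  rw [e1] at h1; rw [e2] at h2; rw [e3] at h4
  have key : (2 * k).choose (2 * j) * (2 * j).choose j * (2 * k - 2 * j).choose (k - j) *
      (j.factorial * j.factorial * ((k - j).factorial * (k - j).factorial)) =
      (2 * k).choose k * (k.choose j) ^ 2 *
      (j.factorial * j.factorial * ((k - j).factorial * (k - j).factorial)) := by
    calc (2 * k).choose (2 * j) * (2 * j).choose j * (2 * k - 2 * j).choose (k - j) *
        (j.factorial * j.factorial * ((k - j).factorial * (k - j).factorial))
        = (2 * k).choose (2 * j) * ((2 * j).choose j * j.factorial * j.factorial) *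
          ((2 * k - 2 * j).choose (k - j) * (k - j).factorial * (k - j).factorial) := by ring
      _ = (2 * k).choose (2 * j) * (2 * j).factorial * (2 * k - 2 * j).factorial := by
          rw [h1, h2]
      _ = (2 * k).factorial := h3
      _ = (2 * k).choose k * k.factorial * k.factorial := h4.symm
      _ = (2 * k).choose k * (k.choose j * j.factorial * (k - j).factorial) *
          (k.choose j * j.factorial * (k - j).factorial) := by rw [h5]
      _ = (2 * k).choose k * (k.choose j) ^ 2 *
          (j.factorial * j.factorial * ((k - j).factorial * (k - j).factorial)) := by ring
  exact Nat.eq_of_mul_eq_mul_right (by positivity) key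

/-- `Σ_{j=0}^{k} C(2k,2j) C(2j,j) C(2k-2j,k-j) = C(2k,k)²`. -/
theorem sum_central_binomial_identity (k : ℕ) :
    ∑ j ∈ Finset.range (k + 1),
        (2 * k).choose (2 * j) * (2 * j).choose j * (2 * k - 2 * j).choose (k - j) =
      ((2 * k).choose k) ^ 2 := by
  have : ∑ j ∈ Finset.range (k + 1),
      (2 * k).choose (2 * j) * (2 * j).choose j * (2 * k - 2 * j).choose (k - j) =
      ∑ j ∈ Finset.range (k + 1), (2 * k).choose k * (k.choose j) ^ 2 := by
    refine Finset.sum_congr rfl fun j hj => ?_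
    rw [Finset.mem_range] at hj
    exact term_eq k j (by omega)
  rw [this, ← Finset.mul_sum, sum_choose_sq, sq]
end
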